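/- Fix integers 3 ≤ l < r. For ρ ∈ [0,1] define α^BEC(ρ,0) = max_{(0,x_c,y)∈D(ρ)} f(0,x_c,y,ρ), the maximum being over points of D(ρ) with first coordinate x₀ = 0. Suppose α^BEC(ρ,0) = 0 and the maximum is achieved only at the point (0,0,0). Then there exists N such that for all n ≥ N and all δ ∈ [−√(ln n / n), √(ln n / n)] with ρ + δ ∈ [0,1], one has α^BEC(ρ+δ,0) = 0. -/

import Mathlib

set_option maxHeartbeats 1000000


open Finset

noncomputable section

/-- Binary entropy in nats, with the convention `0 * log 0 = 0`
(automatic since `Real.log 0 = 0`). -/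
def h2 (x : ℝ) : ℝ := -x * Real.log x - (1 - x) * Real.log (1 - x)

/-- Membership in the domain `D(ρ) ⊆ [0,1]^{2+⌊r/2⌋}`.  The coordinate `y t`
for `t : Fin (r/2)` represents `y_{t+1}`, the fraction of check nodes of
induced degree `2*(t+1)`. -/
def memD (r : ℕ) (ρ x₀ xc : ℝ) (y : Fin (r / 2) → ℝ) : Prop :=
  x₀ ∈ Set.Icc (0 : ℝ) 1 ∧ xc ∈ Set.Icc (0 : ℝ) 1 ∧ (∀ t, y t ∈ Set.Icc (0 : ℝ) 1) ∧
    (∑ t, y t) ≤ 1 ∧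
    (∑ t : Fin (r / 2), (2 * ((t : ℕ) + 1) : ℝ) / (r : ℝ) * y t) = (1 - ρ) * x₀ + ρ * xc

/-- The growth-rate function `f(x₀, x_c, y, ρ)`. -/
def fFun (l r : ℕ) (x₀ xc : ℝ) (y : Fin (r / 2) → ℝ) (ρ : ℝ) : ℝ :=
  -(l : ℝ) * h2 ((1 - ρ) * x₀ + ρ * xc) + (1 - ρ) * h2 x₀ + ρ * h2 xc
    - (l : ℝ) / (r : ℝ) * ((1 - ∑ t, y t) * Real.log (1 - ∑ t, y t))
    - (l : ℝ) / (r : ℝ) * ∑ t, y t * Real.log (y t)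
    + (l : ℝ) / (r : ℝ) *
        ∑ t : Fin (r / 2), y t * Real.log (Nat.choose r (2 * ((t : ℕ) + 1)))

/-- The leading exponent of the loop series for the BEC:
`α^BEC(ρ,η) = max_{(0,x_c,y) ∈ D(ρ)} [f(0,x_c,y,ρ) - 2η ρ x_c]`, the maximum
(formalized as a supremum) running over the points of the compact domain
`D(ρ)` whose first coordinate is `x₀ = 0`. -/
def alphaBEC (l r : ℕ) (ρ η : ℝ) : ℝ :=
  sSup {z : ℝ | ∃ (xc : ℝ) (y : Fin (r / 2) → ℝ), memD r ρ 0 xc y ∧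
    z = fFun l r 0 xc y ρ - 2 * η * (ρ * xc)}


lemma phi_le {x : ℝ} (h0 : 0 ≤ x) (h1 : x ≤ 1) : -((1 - x) * Real.log (1 - x)) ≤ x := by
  rcases eq_or_lt_of_le h1 with h | h
  · simp [← h]; linarith
  · have hx : 0 < 1 - x := by linarith
    have := Real.log_le_sub_one_of_pos (x := (1-x)⁻¹) (by positivity)
    rw [Real.log_inv] at this
    have h2 : -Real.log (1 - x) ≤ (1-x)⁻¹ - 1 := this
    have h3 : (1 - x) * (-Real.log (1 - x)) ≤ (1 - x) * ((1-x)⁻¹ - 1) :=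
      mul_le_mul_of_nonneg_left h2 hx.le
    have h4 : (1 - x) * ((1-x)⁻¹ - 1) = x := by field_simp; ring
    nlinarith

lemma phi_nonneg {x : ℝ} (h0 : 0 ≤ x) (h1 : x ≤ 1) : 0 ≤ -((1 - x) * Real.log (1 - x)) := by
  have : Real.log (1 - x) ≤ 0 := Real.log_nonpos (by linarith) (by linarith)
  nlinarith

lemma choose_le_two_pow (n k : ℕ) : n.choose k ≤ 2 ^ n := by
  rcases le_or_gt k n with h | h
  · calc n.choose k ≤ ∑ i ∈ range (n+1), n.choose i :=
        Finset.single_le_sum (fun i _ => Nat.zero_le _) (mem_range.mpr (Nat.lt_succ_of_le h))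
    _ = 2 ^ n := Nat.sum_range_choose n
  · simp [Nat.choose_eq_zero_of_lt h]

lemma term_bound (c k : ℕ) (hc : 0 < c) {y θ : ℝ} (hy0 : 0 ≤ y) (hθ : 0 < θ) :
    y * Real.log c - y * Real.log y ≤ (c : ℝ) * θ ^ k + (k : ℝ) * y * (-Real.log θ) := by
  rcases eq_or_lt_of_le hy0 with h | hy
  · rw [← h]; simp; positivity
  · set a : ℝ := (c : ℝ) * θ ^ k with ha
    have hapos : 0 < a := by positivity
    have hla : Real.log a = Real.log c + k * Real.log θ := by
      rw [ha, Real.log_mul (by positivity) (by positivity), Real.log_pow]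
    have h1 : Real.log a - Real.log y ≤ a / y - 1 := by
      have := Real.log_le_sub_one_of_pos (x := a / y) (by positivity)
      rwa [Real.log_div hapos.ne' hy.ne'] at this
    have h2 : y * (Real.log a - Real.log y) ≤ y * (a / y - 1) :=
      mul_le_mul_of_nonneg_left h1 hy0
    have h3 : y * (a / y - 1) = a - y := by field_simp
    have h4 : y * Real.log c - y * Real.log y
        = y * (Real.log a - Real.log y) + (k : ℝ) * y * (-Real.log θ) := by
      rw [hla]; ring
    nlinarith

lemma lemA (l r : ℕ) (hl : 3 ≤ l) (hlr : l < r) :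
    ∃ s₀ : ℝ, 0 < s₀ ∧ ∀ ρ' ∈ Set.Icc (0:ℝ) 1, ∀ xc y, memD r ρ' 0 xc y →
      ρ' * xc ≤ s₀ → fFun l r 0 xc y ρ' ≤ 0 := by
  have hr0 : 0 < r := by omega
  have hrR : (0:ℝ) < r := by exact_mod_cast hr0
  have hlR : (3:ℝ) ≤ l := by exact_mod_cast hl
  set C₂ : ℝ := 1 + (l:ℝ)/2 + (l:ℝ) * 2 ^ r with hC₂def
  have hC₂pos : 0 < C₂ := by positivity
  clear_value C₂
  refine ⟨Real.exp (-(2*C₂)), Real.exp_pos _, ?_⟩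
  rintro ρ' ⟨hρ0, hρ1⟩ xc y ⟨-, ⟨hxc0, hxc1⟩, hy, hY1, hcon⟩ hss
  set s := ρ' * xc with hsdef
  have hs0 : 0 ≤ s := mul_nonneg hρ0 hxc0
  have hs1 : s ≤ 1 := mul_le_one₀ hρ1 hxc0 hxc1
  have hcon' : (∑ t : Fin (r/2), (2*((t:ℕ)+1) : ℝ)/(r:ℝ) * y t) = s := by
    rw [hcon]; ring
  clear_value s
  clear hcon
  have h20 : h2 0 = 0 := by simp [h2]
  have hfe : fFun l r 0 xc y ρ' =
      -(l:ℝ) * h2 s + ρ' * h2 xc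
      - (l:ℝ)/(r:ℝ) * ((1 - ∑ t, y t) * Real.log (1 - ∑ t, y t))
      - (l:ℝ)/(r:ℝ) * ∑ t, y t * Real.log (y t)
      + (l:ℝ)/(r:ℝ) * ∑ t : Fin (r/2), y t * Real.log (Nat.choose r (2*((t:ℕ)+1))) := by
    have he : (1 - ρ') * 0 + ρ' * xc = s := by rw [hsdef]; ring
    rw [fFun, he, h20]; ring
  rcases eq_or_lt_of_le hs0 with hs | hs
  · -- s = 0
    have hterm : ∀ t ∈ (univ : Finset (Fin (r/2))), (0:ℝ) ≤ (2*((t:ℕ)+1) : ℝ)/(r:ℝ) * y t := by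
      intro t _; have := (hy t).1; positivity
    have hz := (Finset.sum_eq_zero_iff_of_nonneg hterm).mp (by rw [hcon', ← hs])
    have hy0 : ∀ t, y t = 0 := by
      intro t
      have := hz t (mem_univ t)
      have hw : (0:ℝ) < (2*((t:ℕ)+1) : ℝ)/(r:ℝ) := by positivity
      exact by nlinarith [this]
    have hzero2 : ρ' * h2 xc = 0 := by
      have hz0 : ρ' * xc = 0 := by rw [← hsdef, ← hs]
      rcases mul_eq_zero.mp hz0 with h | h
      · rw [h, zero_mul]
      · rw [h, h20, mul_zero]
    rw [hfe, ← hs, hzero2, h20]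
    simp [hy0]
  · -- s > 0
    set θ := Real.sqrt s with hθdef
    have hθpos : 0 < θ := Real.sqrt_pos.mpr hs
    have hθ1 : θ ≤ 1 := Real.sqrt_le_one.mpr hs1
    have hθsq : θ^2 = s := Real.sq_sqrt hs0
    have hlogθ : -Real.log θ = -(Real.log s)/2 := by rw [hθdef, Real.log_sqrt hs0]; ring
    clear_value θ
    have hs' : (0:ℝ) < ρ' * xc := by rw [hsdef] at hs; exact hs
    have hρpos : 0 < ρ' := by nlinarith [mul_nonneg hρ0 (sub_nonneg.mpr hxc1)]
    have hxcpos : 0 < xc := by nlinarith [mul_nonneg hxc0 (sub_nonneg.mpr hρ1)]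
    set Y := ∑ t, y t with hYdef
    have hY0 : (0:ℝ) ≤ Y := Finset.sum_nonneg fun t _ => (hy t).1
    have hYs' : ∑ t : Fin (r/2), y t ≤ (r:ℝ)/2 * s := by
      calc ∑ t : Fin (r/2), y t
          ≤ ∑ t : Fin (r/2), (r:ℝ)/2 * ((2*((t:ℕ)+1) : ℝ)/(r:ℝ) * y t) := by
            refine Finset.sum_le_sum fun (t : Fin (r/2)) _ => ?_
            have he : (r:ℝ)/2 * ((2*((t:ℕ)+1) : ℝ)/(r:ℝ) * y t) = (((t:ℕ):ℝ)+1) * y t := by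
              field_simp
            rw [he]
            nlinarith [(hy t).1, Nat.cast_nonneg (α := ℝ) (t:ℕ)]
        _ = (r:ℝ)/2 * s := by rw [← Finset.mul_sum, hcon']
    -- Y ≤ r/2 * s
    have hYs : Y ≤ (r:ℝ)/2 * s := by rw [hYdef]; exact hYs'
    clear_value Y
    -- sum of each 2(t+1) y_t
    have hys : ∑ t : Fin (r/2), (2*((t:ℕ)+1) : ℝ) * y t = (r:ℝ) * s := by
      have he : ∀ t ∈ (univ : Finset (Fin (r/2))), (2*((t:ℕ)+1) : ℝ) * y t
          = (r:ℝ) * ((2*((t:ℕ)+1) : ℝ)/(r:ℝ) * y t) := by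
        intro t _; field_simp
      rw [Finset.sum_congr rfl he, ← Finset.mul_sum, hcon']
    -- A1
    have hphis := phi_nonneg hs0 hs1
    have hphixc := phi_le hxc0 hxc1
    have hh2s : -(s*Real.log s) ≤ h2 s := by unfold h2; nlinarith
    have hh2xc : h2 xc ≤ -(xc*Real.log xc) + xc := by unfold h2; nlinarith
    have hkey : ρ' * -(xc * Real.log xc) ≤ -(s * Real.log s) := by
      have hlρ : Real.log ρ' ≤ 0 := Real.log_nonpos hρ0 hρ1
      rw [hsdef, Real.log_mul hρpos.ne' hxcpos.ne']
      nlinarith [mul_nonpos_of_nonneg_of_nonpos (mul_nonneg hρ0 hxc0) hlρ]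
    have hA1 : -(l:ℝ) * h2 s + ρ' * h2 xc ≤ ((l:ℝ)-1)*(s*Real.log s) + s := by
      have ha : -(l:ℝ) * h2 s ≤ (l:ℝ)*(s*Real.log s) := by nlinarith [Nat.cast_nonneg (α := ℝ) l]
      have hb : ρ' * h2 xc ≤ ρ' * (-(xc*Real.log xc) + xc) := mul_le_mul_of_nonneg_left hh2xc hρ0
      have hc : ρ' * (-(xc*Real.log xc) + xc) = ρ' * -(xc*Real.log xc) + s := by rw [hsdef]; ring
      linarith
    -- A2
    have hlr0 : (0:ℝ) ≤ (l:ℝ)/(r:ℝ) := by positivity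
    have hA2 : -((l:ℝ)/(r:ℝ) * ((1 - Y) * Real.log (1 - Y))) ≤ (l:ℝ)*s/2 := by
      have h1 : -((1 - Y) * Real.log (1 - Y)) ≤ (r:ℝ)/2 * s := (phi_le hY0 hY1).trans hYs
      have h2 := mul_le_mul_of_nonneg_left h1 hlr0
      have h3 : (l:ℝ)/(r:ℝ) * ((r:ℝ)/2 * s) = (l:ℝ)*s/2 := by field_simp
      nlinarith
    -- A3
    have hch : ∀ t : Fin (r/2), 0 < Nat.choose r (2*((t:ℕ)+1)) := by
      intro t
      refine Nat.choose_pos ?_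
      have := t.2
      omega
    have hsum3 : ∑ t : Fin (r/2),
        (y t * Real.log (Nat.choose r (2*((t:ℕ)+1))) - y t * Real.log (y t))
        ≤ (r:ℝ)*2^r*s + (r:ℝ)*s*(-(Real.log s)/2) := by
      have step1 : ∀ t ∈ (univ : Finset (Fin (r/2))),
          y t * Real.log (Nat.choose r (2*((t:ℕ)+1))) - y t * Real.log (y t)
          ≤ ((Nat.choose r (2*((t:ℕ)+1)) : ℝ)) * θ ^ (2*((t:ℕ)+1))
            + (2*((t:ℕ)+1) : ℝ) * y t * (-Real.log θ) := by
        intro t _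
        have := term_bound (Nat.choose r (2*((t:ℕ)+1))) (2*((t:ℕ)+1)) (hch t) (hy t).1 hθpos
        convert this using 3 <;> push_cast <;> ring
      calc ∑ t : Fin (r/2), (y t * Real.log (Nat.choose r (2*((t:ℕ)+1))) - y t * Real.log (y t))
          ≤ ∑ t : Fin (r/2), (((Nat.choose r (2*((t:ℕ)+1)) : ℝ)) * θ ^ (2*((t:ℕ)+1))
            + (2*((t:ℕ)+1) : ℝ) * y t * (-Real.log θ)) := Finset.sum_le_sum step1
        _ = (∑ t : Fin (r/2), ((Nat.choose r (2*((t:ℕ)+1)) : ℝ)) * θ ^ (2*((t:ℕ)+1)))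
            + (-Real.log θ) * ∑ t : Fin (r/2), (2*((t:ℕ)+1) : ℝ) * y t := by
            rw [Finset.sum_add_distrib, Finset.mul_sum]
            congr 1
            exact Finset.sum_congr rfl fun (t : Fin (r/2)) _ => by ring
        _ ≤ (r:ℝ)*2^r*s + (r:ℝ)*s*(-(Real.log s)/2) := by
            have hb1 : (∑ t : Fin (r/2), ((Nat.choose r (2*((t:ℕ)+1)) : ℝ)) * θ ^ (2*((t:ℕ)+1)))
                ≤ (r:ℝ) * 2^r * s := by
              calc (∑ t : Fin (r/2), ((Nat.choose r (2*((t:ℕ)+1)) : ℝ)) * θ ^ (2*((t:ℕ)+1)))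
                  ≤ ∑ _t : Fin (r/2), (2:ℝ)^r * θ^2 := by
                    refine Finset.sum_le_sum fun t _ => ?_
                    have hc1 : ((Nat.choose r (2*((t:ℕ)+1)) : ℝ)) ≤ (2:ℝ)^r := by
                      exact_mod_cast Nat.cast_le.mpr (choose_le_two_pow r _)
                    have hc2 : θ ^ (2*((t:ℕ)+1)) ≤ θ^2 :=
                      pow_le_pow_of_le_one hθpos.le hθ1 (by omega)
                    have := mul_le_mul hc1 hc2 (by positivity) (by positivity)
                    exact this
                _ = ((r/2 : ℕ):ℝ) * ((2:ℝ)^r * θ^2) := by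
                    rw [Finset.sum_const, Finset.card_univ, Fintype.card_fin, nsmul_eq_mul]
                _ ≤ (r:ℝ) * 2^r * s := by
                    rw [hθsq]
                    have hmr : ((r/2 : ℕ):ℝ) ≤ (r:ℝ) := by
                      exact_mod_cast Nat.cast_le.mpr (Nat.div_le_self r 2)
                    nlinarith [mul_le_mul_of_nonneg_right hmr (by positivity : (0:ℝ) ≤ (2:ℝ)^r*s)]
            have hb2 : (-Real.log θ) * (∑ t : Fin (r/2), (2*((t:ℕ)+1) : ℝ) * y t)
                = (r:ℝ)*s*(-(Real.log s)/2) := by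
              rw [hys, hθdef, Real.log_sqrt hs0]; ring
            linarith
    have hA3 : -((l:ℝ)/(r:ℝ) * ∑ t, y t * Real.log (y t))
        + (l:ℝ)/(r:ℝ) * ∑ t : Fin (r/2), y t * Real.log (Nat.choose r (2*((t:ℕ)+1)))
        ≤ (l:ℝ)*2^r*s + (l:ℝ)*s*(-(Real.log s)/2) := by
      have he : -((l:ℝ)/(r:ℝ) * ∑ t, y t * Real.log (y t))
          + (l:ℝ)/(r:ℝ) * ∑ t : Fin (r/2), y t * Real.log (Nat.choose r (2*((t:ℕ)+1)))
          = (l:ℝ)/(r:ℝ) * ∑ t : Fin (r/2),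
            (y t * Real.log (Nat.choose r (2*((t:ℕ)+1))) - y t * Real.log (y t)) := by
        rw [Finset.sum_sub_distrib]; ring
      rw [he]
      have h2 := mul_le_mul_of_nonneg_left hsum3 hlr0
      have h3 : (l:ℝ)/(r:ℝ) * ((r:ℝ)*2^r*s + (r:ℝ)*s*(-(Real.log s)/2))
          = (l:ℝ)*2^r*s + (l:ℝ)*s*(-(Real.log s)/2) := by field_simp
      linarith
    -- final
    have hlog : Real.log s ≤ -(2*C₂) := by
      have := (Real.log_le_log_iff hs (Real.exp_pos _)).mpr hss
      rwa [Real.log_exp] at this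
    have hX : s * Real.log s ≤ s * (-(2*C₂)) := mul_le_mul_of_nonneg_left hlog hs0
    have hfinal : ((l:ℝ)-1)*(s*Real.log s) + s + (l:ℝ)*s/2 + ((l:ℝ)*2^r*s + (l:ℝ)*s*(-(Real.log s)/2)) ≤ 0 := by
      have he : ((l:ℝ)-1)*(s*Real.log s) + s + (l:ℝ)*s/2 + ((l:ℝ)*2^r*s + (l:ℝ)*s*(-(Real.log s)/2))
          = ((l:ℝ)/2 - 1)*(s*Real.log s) + C₂ * s := by rw [hC₂def]; ring
      rw [he]
      have hl2 : (0:ℝ) ≤ (l:ℝ)/2 - 1 := by linarith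
      have h1 : ((l:ℝ)/2 - 1)*(s*Real.log s) ≤ ((l:ℝ)/2 - 1)*(s * (-(2*C₂))) :=
        mul_le_mul_of_nonneg_left hX hl2
      linarith [mul_nonneg (mul_nonneg hC₂pos.le hs0) (by linarith : (0:ℝ) ≤ (l:ℝ) - 3), h1]
    rw [hfe]
    linarith

lemma fFun_zero (l r : ℕ) (ρ' : ℝ) : fFun l r 0 0 0 ρ' = 0 := by
  simp [fFun, h2]

lemma memD_zero (r : ℕ) (ρ' : ℝ) : memD r ρ' 0 0 0 :=
  ⟨⟨le_refl _, zero_le_one⟩, ⟨le_refl _, zero_le_one⟩,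
    fun t => ⟨le_refl _, zero_le_one⟩, by simp, by simp⟩

lemma continuous_h2 : Continuous h2 := by
  have c1 : Continuous fun x : ℝ => x * Real.log x := Real.continuous_mul_log
  have c2 : Continuous fun x : ℝ => (1 - x) * Real.log (1 - x) :=
    c1.comp (continuous_const.sub continuous_id)
  have he : h2 = fun x => -(x * Real.log x) - (1 - x) * Real.log (1 - x) := by
    funext x; simp [h2]
  rw [he]; exact (c1.neg).sub c2

lemma lemB (l r : ℕ) (hl : 3 ≤ l) (hlr : l < r) (ρ : ℝ)
    (hmax : ∀ (xc : ℝ) (y : Fin (r / 2) → ℝ), memD r ρ 0 xc y →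
      ¬(xc = 0 ∧ y = 0) → fFun l r 0 xc y ρ < fFun l r 0 0 0 ρ) :
    ∃ δ₀ : ℝ, 0 < δ₀ ∧ ∀ ρ' ∈ Set.Icc (0:ℝ) 1, |ρ' - ρ| < δ₀ →
      ∀ xc y, memD r ρ' 0 xc y → fFun l r 0 xc y ρ' ≤ 0 := by
  obtain ⟨s₀, hs₀, hA⟩ := lemA l r hl hlr
  have hyc : ∀ t : Fin (r/2), Continuous fun p : ℝ × ℝ × (Fin (r/2) → ℝ) => p.2.2 t :=
    fun t => (continuous_apply t).comp (continuous_snd.comp continuous_snd)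
  have hsumc : Continuous fun p : ℝ × ℝ × (Fin (r/2) → ℝ) => ∑ t, p.2.2 t :=
    continuous_finset_sum _ fun t _ => hyc t
  have hFc : Continuous fun p : ℝ × ℝ × (Fin (r/2) → ℝ) => fFun l r 0 p.2.1 p.2.2 p.1 := by
    unfold fFun
    refine Continuous.add (Continuous.sub (Continuous.sub
      (Continuous.add (Continuous.add ?_ ?_) ?_) ?_) ?_) ?_
    · exact continuous_const.mul (continuous_h2.comp
        (((continuous_const.sub continuous_fst).mul continuous_const).add
          (continuous_fst.mul (continuous_fst.comp continuous_snd))))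
    · exact (continuous_const.sub continuous_fst).mul continuous_const
    · exact continuous_fst.mul (continuous_h2.comp (continuous_fst.comp continuous_snd))
    · exact continuous_const.mul
        ((Real.continuous_mul_log).comp (continuous_const.sub hsumc))
    · exact continuous_const.mul
        (continuous_finset_sum _ fun t _ => Real.continuous_mul_log.comp (hyc t))
    · exact continuous_const.mul
        (continuous_finset_sum _ fun t _ => (hyc t).mul continuous_const)
  have hwc : Continuous fun p : ℝ × ℝ × (Fin (r/2) → ℝ) =>
      ∑ t : Fin (r/2), (2*((t:ℕ)+1):ℝ)/(r:ℝ) * p.2.2 t :=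
    continuous_finset_sum _ fun t _ => continuous_const.mul (hyc t)
  have hrhsc : Continuous fun p : ℝ × ℝ × (Fin (r/2) → ℝ) => (1 - p.1) * 0 + p.1 * p.2.1 :=
    ((continuous_const.sub continuous_fst).mul continuous_const).add
      (continuous_fst.mul (continuous_fst.comp continuous_snd))
  have hclosed : IsClosed {p : ℝ × ℝ × (Fin (r/2) → ℝ) |
      memD r p.1 0 p.2.1 p.2.2 ∧ p.1 ∈ Set.Icc (0:ℝ) 1} := by
    have heq : {p : ℝ × ℝ × (Fin (r/2) → ℝ) | memD r p.1 0 p.2.1 p.2.2 ∧ p.1 ∈ Set.Icc (0:ℝ) 1}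
        = ({p : ℝ × ℝ × (Fin (r/2) → ℝ) | p.2.1 ∈ Set.Icc (0:ℝ) 1}
        ∩ ((⋂ t : Fin (r/2), {p : ℝ × ℝ × (Fin (r/2) → ℝ) | p.2.2 t ∈ Set.Icc (0:ℝ) 1})
        ∩ ({p : ℝ × ℝ × (Fin (r/2) → ℝ) | (∑ t, p.2.2 t) ≤ 1}
        ∩ ({p : ℝ × ℝ × (Fin (r/2) → ℝ) |
              (∑ t : Fin (r/2), (2*((t:ℕ)+1):ℝ)/(r:ℝ) * p.2.2 t) = (1 - p.1) * 0 + p.1 * p.2.1}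
        ∩ {p : ℝ × ℝ × (Fin (r/2) → ℝ) | p.1 ∈ Set.Icc (0:ℝ) 1})))) := by
      ext p
      simp only [Set.mem_setOf_eq, Set.mem_inter_iff, Set.mem_iInter, memD]
      constructor
      · rintro ⟨⟨h1, h2, h3, h4, h5⟩, h6⟩; exact ⟨h2, h3, h4, h5, h6⟩
      · rintro ⟨h2, h3, h4, h5, h6⟩
        exact ⟨⟨⟨le_refl 0, zero_le_one⟩, h2, h3, h4, h5⟩, h6⟩
    rw [heq]
    refine IsClosed.inter (isClosed_Icc.preimage (continuous_fst.comp continuous_snd))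
      (IsClosed.inter (isClosed_iInter fun t => isClosed_Icc.preimage (hyc t))
        (IsClosed.inter (isClosed_le hsumc continuous_const)
          (IsClosed.inter (isClosed_eq hwc hrhsc) (isClosed_Icc.preimage continuous_fst))))
  have hsub : {p : ℝ × ℝ × (Fin (r/2) → ℝ) | memD r p.1 0 p.2.1 p.2.2 ∧ p.1 ∈ Set.Icc (0:ℝ) 1}
      ⊆ Set.Icc (0, 0, (0 : Fin (r/2) → ℝ)) (1, 1, (1 : Fin (r/2) → ℝ)) := by
    rintro p ⟨⟨-, hxc, hy, -, -⟩, hρ'⟩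
    constructor
    · exact ⟨hρ'.1, hxc.1, fun t => (hy t).1⟩
    · exact ⟨hρ'.2, hxc.2, fun t => (hy t).2⟩
  have hKc : IsCompact {p : ℝ × ℝ × (Fin (r/2) → ℝ) |
      memD r p.1 0 p.2.1 p.2.2 ∧ p.1 ∈ Set.Icc (0:ℝ) 1} :=
    IsCompact.of_isClosed_subset isCompact_Icc hclosed hsub
  have hTc : IsCompact ({p : ℝ × ℝ × (Fin (r/2) → ℝ) |
        memD r p.1 0 p.2.1 p.2.2 ∧ p.1 ∈ Set.Icc (0:ℝ) 1}
      ∩ ({p | 0 ≤ fFun l r 0 p.2.1 p.2.2 p.1} ∩ {p | s₀ ≤ p.1 * p.2.1})) :=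
    hKc.inter_right ((isClosed_le continuous_const hFc).inter
      (isClosed_le continuous_const (continuous_fst.mul (continuous_fst.comp continuous_snd))))
  have hCc : IsCompact (Prod.fst '' ({p : ℝ × ℝ × (Fin (r/2) → ℝ) |
        memD r p.1 0 p.2.1 p.2.2 ∧ p.1 ∈ Set.Icc (0:ℝ) 1}
      ∩ ({p | 0 ≤ fFun l r 0 p.2.1 p.2.2 p.1} ∩ {p | s₀ ≤ p.1 * p.2.1}))) :=
    hTc.image continuous_fst
  have hρnot : ρ ∉ Prod.fst '' ({p : ℝ × ℝ × (Fin (r/2) → ℝ) |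
        memD r p.1 0 p.2.1 p.2.2 ∧ p.1 ∈ Set.Icc (0:ℝ) 1}
      ∩ ({p | 0 ≤ fFun l r 0 p.2.1 p.2.2 p.1} ∩ {p | s₀ ≤ p.1 * p.2.1})) := by
    rintro ⟨p, ⟨⟨hmem, -⟩, hF, hs⟩, hp1⟩
    simp only [Set.mem_setOf_eq] at hF hs
    rw [hp1] at hmem hF hs
    have hxne : p.2.1 ≠ 0 := by
      intro h; rw [h, mul_zero] at hs; linarith
    have := hmax p.2.1 p.2.2 hmem (fun hc => hxne hc.1)
    rw [fFun_zero] at this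
    linarith
  obtain ⟨δ₀, hδ₀pos, hball⟩ := Metric.isOpen_iff.mp hCc.isClosed.isOpen_compl ρ hρnot
  refine ⟨δ₀, hδ₀pos, ?_⟩
  intro ρ' hρ' hd xc y hmem
  by_contra hpos
  push_neg at hpos
  rcases le_or_gt s₀ (ρ' * xc) with hbig | hsmall
  · have hmemT : (ρ', xc, y) ∈ ({p : ℝ × ℝ × (Fin (r/2) → ℝ) |
        memD r p.1 0 p.2.1 p.2.2 ∧ p.1 ∈ Set.Icc (0:ℝ) 1}
      ∩ ({p | 0 ≤ fFun l r 0 p.2.1 p.2.2 p.1} ∩ {p | s₀ ≤ p.1 * p.2.1})) :=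
      ⟨⟨hmem, hρ'⟩, le_of_lt hpos, hbig⟩
    have hmemC : ρ' ∈ Prod.fst '' _ := ⟨(ρ', xc, y), hmemT, rfl⟩
    have hballm : ρ' ∈ Metric.ball ρ δ₀ := by rw [Metric.mem_ball, Real.dist_eq]; exact hd
    exact (hball hballm) hmemC
  · exact absurd (hA ρ' hρ' xc y hmem hsmall.le) (not_le.mpr hpos)

/-- **Lemma 2 (BEC case).**  If `α^BEC(ρ,0) = 0` and the maximum over the
slice `{(0,x_c,y) ∈ D(ρ)}` is achieved only at `(0,0,0)`, then for all
sufficiently large `n`, for every `δ ∈ [-√(ln n / n), √(ln n / n)]` with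
`ρ + δ ∈ [0,1]`, one still has `α^BEC(ρ+δ, 0) = 0`. -/
theorem alphaBEC_stable_under_perturbation (l r : ℕ) (hl : 3 ≤ l) (hlr : l < r)
    (ρ : ℝ) (hρ : ρ ∈ Set.Icc (0 : ℝ) 1)
    (hzero : alphaBEC l r ρ 0 = 0)
    (hmax : ∀ (xc : ℝ) (y : Fin (r / 2) → ℝ), memD r ρ 0 xc y →
      ¬(xc = 0 ∧ y = 0) → fFun l r 0 xc y ρ < fFun l r 0 0 0 ρ) :
    ∃ N : ℕ, ∀ n : ℕ, N ≤ n → ∀ δ : ℝ,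
      -Real.sqrt (Real.log n / n) ≤ δ → δ ≤ Real.sqrt (Real.log n / n) →
      ρ + δ ∈ Set.Icc (0 : ℝ) 1 → alphaBEC l r (ρ + δ) 0 = 0 := by
  obtain ⟨δ₀, hδ₀, hB⟩ := lemB l r hl hlr ρ hmax
  have htend : Filter.Tendsto (fun n : ℕ => Real.sqrt (Real.log n / n))
      Filter.atTop (nhds 0) := by
    have h1 : Filter.Tendsto (fun x : ℝ => Real.log x / x) Filter.atTop (nhds 0) :=
      Real.isLittleO_log_id_atTop.tendsto_div_nhds_zero
    have h2 : Filter.Tendsto (fun n : ℕ => Real.log n / n) Filter.atTop (nhds 0) :=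
      h1.comp tendsto_natCast_atTop_atTop
    have h3 := h2.sqrt
    rwa [Real.sqrt_zero] at h3
  have hev : ∀ᶠ n : ℕ in Filter.atTop, Real.sqrt (Real.log n / n) < δ₀ :=
    htend.eventually_lt_const hδ₀
  obtain ⟨N, hN⟩ := Filter.eventually_atTop.mp hev
  refine ⟨N, fun n hn δ hδ1 hδ2 hIcc => ?_⟩
  have hsq := hN n hn
  have hd : |(ρ + δ) - ρ| < δ₀ := by
    rw [add_sub_cancel_left, abs_lt]
    constructor <;> linarith
  have hbound := hB (ρ + δ) hIcc hd
  have hub : ∀ z ∈ {z : ℝ | ∃ (xc : ℝ) (y : Fin (r / 2) → ℝ), memD r (ρ+δ) 0 xc y ∧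
      z = fFun l r 0 xc y (ρ+δ) - 2 * 0 * ((ρ+δ) * xc)}, z ≤ 0 := by
    rintro z ⟨xc, y, hm, rfl⟩
    simpa using hbound xc y hm
  have hmem0 : (0:ℝ) ∈ {z : ℝ | ∃ (xc : ℝ) (y : Fin (r / 2) → ℝ), memD r (ρ+δ) 0 xc y ∧
      z = fFun l r 0 xc y (ρ+δ) - 2 * 0 * ((ρ+δ) * xc)} :=
    ⟨0, 0, memD_zero r (ρ+δ), by rw [fFun_zero]; ring⟩
  exact le_antisymm (csSup_le ⟨0, hmem0⟩ hub) (le_csSup ⟨0, hub⟩ hmem0)
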